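/- Let C, H, Λ, t_X, t_Y be real numbers and let x₀, y₀ be nonzero reals. Set A = −2C, let X(x,y,z) = (A x − H(((A−C)² + 1) z − Λ), Λ − (1+C²) z, 2C z + y) and Y(x,y,z) = (−Λ − (1+C²) z, A y − H(((A−C)² + 1) z + Λ), 2C z + x), with Jacobian matrices DX (rows (A,0,−H((A−C)²+1)), (0,0,−(1+C²)), (0,1,2C)) and DY (rows (0,0,−(1+C²)), (0,A,−H((A−C)²+1)), (1,0,2C)). Let p₀ = (x₀,y₀,0), p₁ = (−y₀,−x₀,0), and define the saltation matrices S_{X→Y}(p₁) = I + ((Y(p₁) − X(p₁))/X₃(p₁))·e₃ᵀ and S_{Y→X}(p₀) = I − ((Y(p₀) − X(p₀))/Y₃(p₀))·e₃ᵀ, where X₃, Y₃ denote the third components and e₃ = (0,0,1). Then the monodromy matrix M = S_{Y→X}(p₀)·exp(t_Y·DY)·S_{X→Y}(p₁)·exp(t_X·DX) satisfies det(M) = (y₀/x₀)². -/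

import Mathlib

open Matrix

/-- The upper vector field X with A = −2C, as a function on Fin 3 → ℝ. -/
noncomputable def Xv (C H Λ : ℝ) (p : Fin 3 → ℝ) : Fin 3 → ℝ :=
  ![(-2 * C) * p 0 - H * (((-2 * C - C) ^ 2 + 1) * p 2 - Λ),
    Λ - (1 + C ^ 2) * p 2,
    2 * C * p 2 + p 1]

/-- The lower vector field Y with A = −2C, as a function on Fin 3 → ℝ. -/
noncomputable def Yv (C H Λ : ℝ) (p : Fin 3 → ℝ) : Fin 3 → ℝ :=
  ![-Λ - (1 + C ^ 2) * p 2,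
    (-2 * C) * p 1 - H * (((-2 * C - C) ^ 2 + 1) * p 2 + Λ),
    2 * C * p 2 + p 0]

/-- The Jacobian of X with A = −2C. -/
noncomputable def DXmat (C H : ℝ) : Matrix (Fin 3) (Fin 3) ℝ :=
  !![-2 * C, 0, -H * ((-2 * C - C) ^ 2 + 1);
     0, 0, -(1 + C ^ 2);
     0, 1, 2 * C]

/-- The Jacobian of Y with A = −2C. -/
noncomputable def DYmat (C H : ℝ) : Matrix (Fin 3) (Fin 3) ℝ :=
  !![0, 0, -(1 + C ^ 2);
     0, -2 * C, -H * ((-2 * C - C) ^ 2 + 1);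
     1, 0, 2 * C]

/-- The saltation matrix S_{X→Y} at a point p: I + ((Y−X)/X₃)·e₃ᵀ. -/
noncomputable def saltXY (C H Λ : ℝ) (p : Fin 3 → ℝ) : Matrix (Fin 3) (Fin 3) ℝ :=
  1 + Matrix.vecMulVec (fun i => (Yv C H Λ p i - Xv C H Λ p i) / Xv C H Λ p 2) ![0, 0, 1]

/-- The saltation matrix S_{Y→X} at a point p: I − ((Y−X)/Y₃)·e₃ᵀ. -/
noncomputable def saltYX (C H Λ : ℝ) (p : Fin 3 → ℝ) : Matrix (Fin 3) (Fin 3) ℝ :=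
  1 - Matrix.vecMulVec (fun i => (Yv C H Λ p i - Xv C H Λ p i) / Yv C H Λ p 2) ![0, 0, 1]

section DetExpAux

open NormedSpace

attribute [local instance] Matrix.linftyOpNormedRing Matrix.linftyOpNormedAlgebra

/-- Evaluation of a matrix entry as a continuous linear map. -/
noncomputable def entryCLM (i j : Fin 3) : Matrix (Fin 3) (Fin 3) ℝ →L[ℝ] ℝ :=
  LinearMap.toContinuousLinearMap (Matrix.entryLinearMap ℝ ℝ i j)

lemma hasDerivAt_entry (A : Matrix (Fin 3) (Fin 3) ℝ) (t : ℝ) (i j : Fin 3) :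
    HasDerivAt (fun u : ℝ => exp (u • A) i j) ((exp (t • A) * A) i j) t := by
  have h := _root_.hasDerivAt_exp_smul_const (𝕂 := ℝ) A t
  exact (entryCLM i j).hasFDerivAt.comp_hasDerivAt t h

lemma hasDerivAt_det_exp (A : Matrix (Fin 3) (Fin 3) ℝ) (t : ℝ) :
    HasDerivAt (fun u : ℝ => (exp (u • A)).det)
      ((exp (t • A)).det * A.trace) t := by
  have h := hasDerivAt_entry A t
  have key : HasDerivAt (fun u : ℝ =>
      exp (u • A) 0 0 * exp (u • A) 1 1 * exp (u • A) 2 2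
      - exp (u • A) 0 0 * exp (u • A) 1 2 * exp (u • A) 2 1
      - exp (u • A) 0 1 * exp (u • A) 1 0 * exp (u • A) 2 2
      + exp (u • A) 0 1 * exp (u • A) 1 2 * exp (u • A) 2 0
      + exp (u • A) 0 2 * exp (u • A) 1 0 * exp (u • A) 2 1
      - exp (u • A) 0 2 * exp (u • A) 1 1 * exp (u • A) 2 0)
      ((exp (t • A)).det * A.trace) t := by
    have H := ((((((h 0 0).mul (h 1 1)).mul (h 2 2)).sub
      (((h 0 0).mul (h 1 2)).mul (h 2 1))).sub
      (((h 0 1).mul (h 1 0)).mul (h 2 2))).add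
      (((h 0 1).mul (h 1 2)).mul (h 2 0))).add
      (((h 0 2).mul (h 1 0)).mul (h 2 1))
    have H2 := H.sub (((h 0 2).mul (h 1 1)).mul (h 2 0))
    refine H2.congr_deriv ?_
    simp only [Matrix.det_fin_three, Matrix.mul_apply, Matrix.trace_fin_three,
      Fin.sum_univ_three, Pi.mul_apply]
    ring
  have : (fun u : ℝ => (exp (u • A)).det) = (fun u : ℝ =>
      exp (u • A) 0 0 * exp (u • A) 1 1 * exp (u • A) 2 2
      - exp (u • A) 0 0 * exp (u • A) 1 2 * exp (u • A) 2 1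
      - exp (u • A) 0 1 * exp (u • A) 1 0 * exp (u • A) 2 2
      + exp (u • A) 0 1 * exp (u • A) 1 2 * exp (u • A) 2 0
      + exp (u • A) 0 2 * exp (u • A) 1 0 * exp (u • A) 2 1
      - exp (u • A) 0 2 * exp (u • A) 1 1 * exp (u • A) 2 0) := by
    funext u; rw [Matrix.det_fin_three]
  rw [this]; exact key

/-- Liouville: a trace-free 3×3 matrix has unimodular exponential flow. -/
lemma det_exp_eq_one (A : Matrix (Fin 3) (Fin 3) ℝ) (hA : A.trace = 0) (t : ℝ) :
    (exp (t • A)).det = 1 := by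
  have hderiv : ∀ u : ℝ, HasDerivAt (fun s : ℝ => (exp (s • A)).det) 0 u := by
    intro u
    simpa [hA] using hasDerivAt_det_exp A u
  have hconst : (fun s : ℝ => (exp (s • A)).det) t
      = (fun s : ℝ => (exp (s • A)).det) 0 :=
    is_const_of_deriv_eq_zero (fun u => (hderiv u).differentiableAt)
      (fun u => (hderiv u).deriv) t 0
  simpa [NormedSpace.exp_zero] using hconst

end DetExpAux

lemma det_saltXY (C H Λ x₀ y₀ : ℝ) (hx₀ : x₀ ≠ 0) :
    (saltXY C H Λ ![-y₀, -x₀, 0]).det = y₀ / x₀ := by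
  simp [saltXY, Xv, Yv, Matrix.det_fin_three, Matrix.vecMulVec_apply, Matrix.one_apply]
  rw [div_neg, eq_div_iff hx₀, add_mul, neg_mul, div_mul_cancel₀ _ hx₀]
  ring

lemma det_saltYX (C H Λ x₀ y₀ : ℝ) (hx₀ : x₀ ≠ 0) :
    (saltYX C H Λ ![x₀, y₀, 0]).det = y₀ / x₀ := by
  simp [saltYX, Xv, Yv, Matrix.det_fin_three, Matrix.vecMulVec_apply, Matrix.one_apply]
  field_simp
  ring

/-- The saltation-corrected monodromy matrix of the symmetric cycle has
determinant (y₀/x₀)². -/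
theorem monodromy_det (C H Λ t_X t_Y x₀ y₀ : ℝ) (hx₀ : x₀ ≠ 0) (hy₀ : y₀ ≠ 0) :
    (saltYX C H Λ ![x₀, y₀, 0] * NormedSpace.exp (t_Y • DYmat C H) *
        saltXY C H Λ ![-y₀, -x₀, 0] * NormedSpace.exp (t_X • DXmat C H)).det =
      (y₀ / x₀) ^ 2 := by
  have hX : (DXmat C H).trace = 0 := by
    simp [DXmat, Matrix.trace_fin_three]
  have hY : (DYmat C H).trace = 0 := by
    simp [DYmat, Matrix.trace_fin_three]
  rw [Matrix.det_mul, Matrix.det_mul, Matrix.det_mul,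
    det_exp_eq_one _ hX t_X, det_exp_eq_one _ hY t_Y,
    det_saltXY C H Λ x₀ y₀ hx₀, det_saltYX C H Λ x₀ y₀ hx₀]
  ring
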